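/- For fixed ω ∈ (0,1), the odds ratio ψ(θ,τ) = [1 - ω² F(θ-log(1-ω)) F(τ-log(1-ω))]/(1-ω) satisfies 1+ω < ψ(θ,τ) < 1/(1-ω) for all θ,τ ∈ ℝ, and these bounds are sharp (they are the infimum and supremum over (θ,τ) ∈ ℝ²). -/

import Mathlib

noncomputable def logisticF (u : ℝ) : ℝ := 1 / (1 + Real.exp (-u))

noncomputable def psiOR (ω θ τ : ℝ) : ℝ :=
  (1 - ω ^ 2 * logisticF (θ - Real.log (1 - ω)) * logisticF (τ - Real.log (1 - ω)))
    / (1 - ω)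

lemma logisticF_pos (u : ℝ) : 0 < logisticF u := by
  unfold logisticF; positivity

lemma logisticF_lt_one (u : ℝ) : logisticF u < 1 := by
  unfold logisticF
  rw [div_lt_one (by positivity)]
  linarith [Real.exp_pos (-u)]

lemma exists_logistic_eq {s : ℝ} (hs : s ∈ Set.Ioo (0:ℝ) 1) (c : ℝ) :
    ∃ θ : ℝ, logisticF (θ - c) = s := by
  obtain ⟨h0, h1⟩ := hs
  refine ⟨Real.log (s / (1 - s)) + c, ?_⟩
  unfold logisticF
  have h1s : 0 < 1 - s := by linarith
  rw [add_sub_cancel_right, ← Real.log_inv, Real.exp_log (by positivity), inv_div]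
  have hs0 : s ≠ 0 := ne_of_gt h0
  field_simp
  ring

theorem odds_ratio_sharp_bounds (ω : ℝ) (hω : ω ∈ Set.Ioo (0 : ℝ) 1) :
    (∀ θ τ : ℝ, 1 + ω < psiOR ω θ τ ∧ psiOR ω θ τ < 1 / (1 - ω)) ∧
    IsGLB {x : ℝ | ∃ θ τ : ℝ, psiOR ω θ τ = x} (1 + ω) ∧
    IsLUB {x : ℝ | ∃ θ τ : ℝ, psiOR ω θ τ = x} (1 / (1 - ω)) := by
  obtain ⟨hω0, hω1⟩ := hω
  have h1ω : 0 < 1 - ω := by linarith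
  have hval : ∀ s : ℝ, s ∈ Set.Ioo (0:ℝ) 1 →
      ∃ θ τ : ℝ, psiOR ω θ τ = (1 - ω ^ 2 * s * s) / (1 - ω) := by
    intro s hs
    obtain ⟨θ, hθ⟩ := exists_logistic_eq hs (Real.log (1 - ω))
    exact ⟨θ, θ, by unfold psiOR; rw [hθ]⟩
  have hbounds : ∀ θ τ : ℝ, 1 + ω < psiOR ω θ τ ∧ psiOR ω θ τ < 1 / (1 - ω) := by
    intro θ τ
    have ha0 := logisticF_pos (θ - Real.log (1 - ω))
    have ha1 := logisticF_lt_one (θ - Real.log (1 - ω))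
    have hb0 := logisticF_pos (τ - Real.log (1 - ω))
    have hb1 := logisticF_lt_one (τ - Real.log (1 - ω))
    unfold psiOR
    have hab : logisticF (θ - Real.log (1 - ω)) * logisticF (τ - Real.log (1 - ω)) < 1 := by
      nlinarith [mul_pos (sub_pos.mpr ha1) hb0]
    have hab0 : 0 < logisticF (θ - Real.log (1 - ω)) * logisticF (τ - Real.log (1 - ω)) :=
      mul_pos ha0 hb0
    have hω2 : (0:ℝ) < ω ^ 2 := by positivity
    constructor
    · rw [lt_div_iff₀ h1ω]
      nlinarith [mul_lt_mul_of_pos_left hab hω2]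
    · rw [div_lt_div_iff₀ h1ω h1ω]
      nlinarith [mul_pos (mul_pos hω2 hab0) h1ω]
  refine ⟨hbounds, ⟨?_, ?_⟩, ?_, ?_⟩
  · rintro x ⟨θ, τ, rfl⟩
    exact (hbounds θ τ).1.le
  · intro b hb
    refine le_of_forall_pos_le_add ?_
    intro ε hε
    set δ : ℝ := min (1/2) (ε * (1 - ω) / (2 * ω ^ 2)) with hδdef
    have hδ0 : 0 < δ := lt_min (by norm_num) (by positivity)
    have hδhalf : δ ≤ 1/2 := min_le_left _ _
    have hδ2 : 2 * ω ^ 2 * δ ≤ ε * (1 - ω) := by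
      have := min_le_right (1/2) (ε * (1 - ω) / (2 * ω ^ 2))
      rw [le_div_iff₀ (by positivity)] at this
      linarith [this]
    have hs : (1 - δ) ∈ Set.Ioo (0:ℝ) 1 := ⟨by linarith, by linarith⟩
    obtain ⟨θ, τ, hθτ⟩ := hval (1 - δ) hs
    have hxle : psiOR ω θ τ ≤ 1 + ω + ε := by
      rw [hθτ, div_le_iff₀ h1ω]
      nlinarith [sq_nonneg (ω * δ), mul_pos hω0 hω0]
    exact le_trans (hb ⟨θ, τ, rfl⟩) hxle
  · rintro x ⟨θ, τ, rfl⟩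
    exact (hbounds θ τ).2.le
  · intro b hb
    refine le_of_forall_pos_le_add ?_
    intro ε hε
    set s : ℝ := min (1/2) (ε * (1 - ω) / (2 * ω ^ 2)) with hsdef
    have hs0 : 0 < s := lt_min (by norm_num) (by positivity)
    have hshalf : s ≤ 1/2 := min_le_left _ _
    have hs2 : 2 * ω ^ 2 * s ≤ ε * (1 - ω) := by
      have := min_le_right (1/2) (ε * (1 - ω) / (2 * ω ^ 2))
      rw [le_div_iff₀ (by positivity)] at this
      linarith [this]
    have hsmem : s ∈ Set.Ioo (0:ℝ) 1 := ⟨hs0, by linarith⟩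
    obtain ⟨θ, τ, hθτ⟩ := hval s hsmem
    have hxge : 1 / (1 - ω) - ε ≤ psiOR ω θ τ := by
      rw [hθτ, sub_le_iff_le_add, div_le_iff₀ h1ω, add_mul, div_mul_cancel₀ _ (ne_of_gt h1ω)]
      have hss : s * s ≤ s := by nlinarith
      have h2 : ω ^ 2 * (s * s) ≤ ω ^ 2 * s := by nlinarith [mul_le_mul_of_nonneg_left hss (by positivity : (0:ℝ) ≤ ω ^ 2)]
      nlinarith [mul_pos hε h1ω]
    linarith [hb ⟨θ, τ, rfl⟩]
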